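/- If ξ ~ Min-U-Exp(a,λ), then for every natural number k ≥ 1, E[ξ^k] = (k/λ^k)·(γ(k, aλ) - γ(k+1, aλ)/(aλ)), where γ(s,x) = ∫₀ˣ t^{s-1}e^{-t}dt is the lower incomplete gamma function. -/

import Mathlib

open MeasureTheory Real Set

/-- The lower incomplete gamma function γ(s, x) = ∫₀ˣ t^{s-1} e^{-t} dt. -/
noncomputable def lowerGamma (s x : ℝ) : ℝ := ∫ t in (0 : ℝ)..x, t ^ (s - 1) * Real.exp (-t)

lemma lowerGamma_nat (j : ℕ) (X : ℝ) :
    lowerGamma ((j : ℝ) + 1) X = ∫ t in (0 : ℝ)..X, t ^ j * Real.exp (-t) := by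
  unfold lowerGamma
  simp [add_sub_cancel_right, Real.rpow_natCast]

lemma J_rec (c : ℝ) (hc : c ≠ 0) (X : ℝ) (j : ℕ) :
    (∫ x in (0:ℝ)..X, x ^ (j+1) * Real.exp (-c*x))
      = (((j:ℝ)+1) * (∫ x in (0:ℝ)..X, x ^ j * Real.exp (-c*x))
          - X ^ (j+1) * Real.exp (-c*X)) / c := by
  have key := intervalIntegral.integral_mul_deriv_eq_deriv_mul
      (a := (0:ℝ)) (b := X)
      (u := fun x => x ^ (j+1)) (u' := fun x => ((j:ℝ)+1) * x ^ j)
      (v := fun x => -Real.exp (-c*x) / c) (v' := fun x => Real.exp (-c*x))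
      (fun x _ => by
        have := hasDerivAt_pow (j+1) x
        simpa using this)
      (fun x _ => by
        have h : HasDerivAt (fun y : ℝ => -c * y) (-c) x := by
          simpa using (hasDerivAt_id x).const_mul (-c)
        have h2 := ((h.exp).div_const c).neg
        have h3 : -(Real.exp (-c*x) * -c / c) = Real.exp (-c*x) := by
          field_simp
        rw [h3] at h2
        simpa [neg_div, Pi.neg_def] using h2)
      ((by fun_prop : Continuous fun x : ℝ => ((j:ℝ)+1) * x ^ j).intervalIntegrable _ _)
      ((by fun_prop : Continuous fun x : ℝ => Real.exp (-c*x)).intervalIntegrable _ _)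
  rw [key]
  have step : (∫ x in (0:ℝ)..X, ((j:ℝ)+1) * x ^ j * (-Real.exp (-c*x) / c))
      = (-((j:ℝ)+1)/c) * ∫ x in (0:ℝ)..X, x ^ j * Real.exp (-c*x) := by
    rw [← intervalIntegral.integral_const_mul]
    congr 1 with x
    ring
  rw [step]
  have hj : (0:ℝ) ^ (j+1) = 0 := zero_pow (Nat.succ_ne_zero j)
  simp only [hj]
  field_simp
  ring

lemma J_subst (c : ℝ) (hc : 0 < c) (X : ℝ) (j : ℕ) :
    (∫ t in (0:ℝ)..(c*X), t ^ j * Real.exp (-t))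
      = c ^ (j+1) * ∫ x in (0:ℝ)..X, x ^ j * Real.exp (-c*x) := by
  have h := intervalIntegral.integral_comp_mul_left
      (f := fun t => t ^ j * Real.exp (-t)) (a := (0:ℝ)) (b := X) hc.ne'
  simp only [mul_zero] at h
  have h2 : (∫ x in (0:ℝ)..X, (c*x) ^ j * Real.exp (-(c*x)))
      = c ^ j * ∫ x in (0:ℝ)..X, x ^ j * Real.exp (-c*x) := by
    rw [← intervalIntegral.integral_const_mul]
    congr 1 with x
    rw [mul_pow, neg_mul]
    ring
  rw [h2] at h
  rw [smul_eq_mul] at h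
  field_simp at h
  rw [← h]
  simp only [neg_mul]
  ring

theorem minUExp_moments (a lam : ℝ) (ha : 0 < a) (hlam : 0 < lam) :
    ∀ k : ℕ, 1 ≤ k →
      (∫ x in Set.Ioo (0 : ℝ) a, x ^ k * (Real.exp (-lam * x) / a * (lam * a + 1 - lam * x)))
        = (k : ℝ) / lam ^ k *
            (lowerGamma k (a * lam) - lowerGamma (k + 1) (a * lam) / (a * lam)) := by
  intro k hk
  obtain ⟨m, rfl⟩ := Nat.exists_eq_succ_of_ne_zero (by omega : k ≠ 0)
  have hset : (∫ x in Set.Ioo (0 : ℝ) a,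
        x ^ (m+1) * (Real.exp (-lam * x) / a * (lam * a + 1 - lam * x)))
      = ∫ x in (0:ℝ)..a, x ^ (m+1) * (Real.exp (-lam * x) / a * (lam * a + 1 - lam * x)) := by
    rw [intervalIntegral.integral_of_le ha.le, MeasureTheory.integral_Ioc_eq_integral_Ioo]
  have expand : (∫ x in (0:ℝ)..a, x ^ (m+1) * (Real.exp (-lam * x) / a * (lam * a + 1 - lam * x)))
      = ((lam*a+1)/a) * (∫ x in (0:ℝ)..a, x ^ (m+1) * Real.exp (-lam*x))
          - (lam/a) * (∫ x in (0:ℝ)..a, x ^ (m+2) * Real.exp (-lam*x)) := by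
    have h1 : (∫ x in (0:ℝ)..a,
          (((lam*a+1)/a) * (x ^ (m+1) * Real.exp (-lam*x))
            - (lam/a) * (x ^ (m+2) * Real.exp (-lam*x))))
        = ((lam*a+1)/a) * (∫ x in (0:ℝ)..a, x ^ (m+1) * Real.exp (-lam*x))
            - (lam/a) * (∫ x in (0:ℝ)..a, x ^ (m+2) * Real.exp (-lam*x)) := by
      rw [intervalIntegral.integral_sub
          (((by fun_prop : Continuous fun x : ℝ =>
              ((lam*a+1)/a) * (x ^ (m+1) * Real.exp (-lam*x))).intervalIntegrable _ _))
          (((by fun_prop : Continuous fun x : ℝ =>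
              (lam/a) * (x ^ (m+2) * Real.exp (-lam*x))).intervalIntegrable _ _)),
        intervalIntegral.integral_const_mul, intervalIntegral.integral_const_mul]
    rw [← h1]
    congr 1 with x
    ring
  have hg1 : lowerGamma (↑(m+1)) (a*lam)
      = lam ^ (m+1) * ∫ x in (0:ℝ)..a, x ^ m * Real.exp (-lam*x) := by
    push_cast
    rw [lowerGamma_nat m (a*lam), show a * lam = lam * a from mul_comm a lam,
      J_subst lam hlam a m]
  have hg2 : lowerGamma (↑(m+1) + 1) (a*lam)
      = lam ^ (m+2) * ∫ x in (0:ℝ)..a, x ^ (m+1) * Real.exp (-lam*x) := by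
    have hc : ((m:ℝ)+1) + 1 = ((m+1:ℕ):ℝ) + 1 := by push_cast; ring
    push_cast
    rw [hc, lowerGamma_nat (m+1) (a*lam), show a * lam = lam * a from mul_comm a lam,
      J_subst lam hlam a (m+1), show m+1+1 = m+2 by omega]
  rw [hset, expand, hg1, hg2]
  have hr2 := J_rec lam hlam.ne' a (m+1)
  rw [show m+1+1 = m+2 by omega] at hr2
  rw [hr2, J_rec lam hlam.ne' a m]
  have hane : a ≠ 0 := ha.ne'
  have hlne : lam ≠ 0 := hlam.ne'
  push_cast
  field_simp
  simp only [Nat.succ_eq_add_one]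
  ring
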